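/- Let q_j, q_p be complex quadratic forms on ℝ^{2n} with Hamilton maps F_j, F_p, and let l₁,…,l_k ∈ {1,…,N} index further quadratic forms with Hamilton maps F_{l_i}. For s₁, s₂ ∈ ℕ, let r̃(X) = Re q_j(Im F_{l₁}⋯Im F_{l_k}(Im F_p)^{s₁} X ; Im F_{l₁}⋯Im F_{l_k}(Im F_p)^{s₂} X). Then the Hamilton vector field of Im q_p acting on r̃ satisfies H_{Im q_p} r̃(X) = 2 Re q_j(Im F_{l₁}⋯Im F_{l_k}(Im F_p)^{s₁+1} X ; Im F_{l₁}⋯Im F_{l_k}(Im F_p)^{s₂} X) + 2 Re q_j(Im F_{l₁}⋯Im F_{l_k}(Im F_p)^{s₁} X ; Im F_{l₁}⋯Im F_{l_k}(Im F_p)^{s₂+1} X). -/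

import Mathlib

/-- The phase space `ℝ^n × ℝ^n ≅ ℝ^{2n}`. -/
abbrev PS (n : ℕ) := (Fin n → ℝ) × (Fin n → ℝ)

/-- The canonical symplectic form `σ((x,ξ),(y,η)) = ξ·y − x·η` on `ℝ^{2n}`. -/
noncomputable def symp (n : ℕ) (X Y : PS n) : ℝ :=
  (∑ i, X.2 i * Y.1 i) - ∑ i, X.1 i * Y.2 i

/-- The Poisson bracket `{a,b} = ∂a/∂ξ·∂b/∂x − ∂a/∂x·∂b/∂ξ`, so that
`H_a b = {a,b}` where `H_a` is the Hamilton vector field of `a`. -/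
noncomputable def poisson (n : ℕ) (a b : PS n → ℝ) (X : PS n) : ℝ :=
  ∑ i : Fin n,
    ((fderiv ℝ a X) ((0 : Fin n → ℝ), Pi.single i 1) *
        (fderiv ℝ b X) (Pi.single i 1, (0 : Fin n → ℝ)) -
      (fderiv ℝ a X) (Pi.single i 1, (0 : Fin n → ℝ)) *
        (fderiv ℝ b X) ((0 : Fin n → ℝ), Pi.single i 1))

/-- The composition `Im F_{l₁} ∘ ⋯ ∘ Im F_{l_k}` associated to a tuple `l`. -/
noncomputable def compT (n N : ℕ) (ImF : Fin N → Module.End ℝ (PS n)) {k : ℕ}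
    (l : Fin k → Fin N) : Module.End ℝ (PS n) :=
  (List.ofFn fun i => ImF (l i)).prod

noncomputable def toCLM2 {n : ℕ} (B : PS n →ₗ[ℝ] PS n →ₗ[ℝ] ℝ) :
    PS n →L[ℝ] PS n →L[ℝ] ℝ :=
  LinearMap.toContinuousLinearMap
    { toFun := fun x => LinearMap.toContinuousLinearMap (B x)
      map_add' := fun x y => by apply ContinuousLinearMap.ext; intro z; simp
      map_smul' := fun c x => by apply ContinuousLinearMap.ext; intro z; simp }

@[simp] lemma toCLM2_apply {n : ℕ} (B : PS n →ₗ[ℝ] PS n →ₗ[ℝ] ℝ) (x y : PS n) :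
    toCLM2 B x y = B x y := rfl

lemma fderiv_bilin {n : ℕ} (B : PS n →ₗ[ℝ] PS n →ₗ[ℝ] ℝ)
    (A₁ A₂ : Module.End ℝ (PS n)) (X v : PS n) :
    fderiv ℝ (fun Z => B (A₁ Z) (A₂ Z)) X v
      = B (A₁ v) (A₂ X) + B (A₁ X) (A₂ v) := by
  have hb := (toCLM2 B).isBoundedBilinearMap
  have h1 : HasFDerivAt
      (fun Z : PS n => ((LinearMap.toContinuousLinearMap A₁) Z,
        (LinearMap.toContinuousLinearMap A₂) Z))
      ((LinearMap.toContinuousLinearMap A₁).prod (LinearMap.toContinuousLinearMap A₂)) X :=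
    HasFDerivAt.prodMk ((LinearMap.toContinuousLinearMap A₁).hasFDerivAt)
      ((LinearMap.toContinuousLinearMap A₂).hasFDerivAt)
  have h2 := (hb.hasFDerivAt ((LinearMap.toContinuousLinearMap A₁) X,
    (LinearMap.toContinuousLinearMap A₂) X)).comp X h1
  have h3 : HasFDerivAt (fun Z => B (A₁ Z) (A₂ Z))
      ((hb.deriv ((LinearMap.toContinuousLinearMap A₁) X,
          (LinearMap.toContinuousLinearMap A₂) X)).comp
        ((LinearMap.toContinuousLinearMap A₁).prod (LinearMap.toContinuousLinearMap A₂))) X := h2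
  rw [h3.fderiv]
  simp
  ring

lemma ps_decomp {n : ℕ} (M : PS n) :
    M = (∑ i, M.1 i • ((Pi.single i 1 : Fin n → ℝ), (0 : Fin n → ℝ)))
      + ∑ i, M.2 i • ((0 : Fin n → ℝ), (Pi.single i 1 : Fin n → ℝ)) := by
  refine Prod.ext ?_ ?_ <;>
  · simp only [Prod.fst_add, Prod.snd_add, Prod.fst_sum, Prod.snd_sum, Prod.smul_fst,
      Prod.smul_snd, smul_zero, Finset.sum_const_zero, add_zero, zero_add]
    funext j
    simp [Finset.sum_apply, Pi.single_apply]

/-- for `r̃(X) = Re q_j(Im F_{l₁}⋯Im F_{l_k}(Im F_p)^{s₁} X ;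
Im F_{l₁}⋯Im F_{l_k}(Im F_p)^{s₂} X)` (with `B` the polarized form of `Re q_j`, and
`Im F_p` the Hamilton map of `Im q_p`), the Hamilton vector field of `Im q_p` gives
`H_{Im q_p} r̃(X) = 2 Re q_j(⋯(Im F_p)^{s₁+1}X ; ⋯(Im F_p)^{s₂}X)
 + 2 Re q_j(⋯(Im F_p)^{s₁}X ; ⋯(Im F_p)^{s₂+1}X)`. -/
theorem hamilton_field_of_polarized_term (n N k s₁ s₂ : ℕ) (p : Fin N)
    (l : Fin k → Fin N)
    (B : PS n →ₗ[ℝ] PS n →ₗ[ℝ] ℝ) (hsym : ∀ X Y, B X Y = B Y X)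
    (ImF : Fin N → Module.End ℝ (PS n))
    (BIm : PS n →ₗ[ℝ] PS n →ₗ[ℝ] ℝ) (hImsym : ∀ X Y, BIm X Y = BIm Y X)
    (hImHam : ∀ X Y, BIm X Y = symp n X (ImF p Y)) :
    ∀ X : PS n,
      poisson n (fun Z => BIm Z Z)
        (fun Z => B ((compT n N ImF l * ImF p ^ s₁) Z) ((compT n N ImF l * ImF p ^ s₂) Z)) X
      = 2 * B ((compT n N ImF l * ImF p ^ (s₁ + 1)) X) ((compT n N ImF l * ImF p ^ s₂) X)
        + 2 * B ((compT n N ImF l * ImF p ^ s₁) X) ((compT n N ImF l * ImF p ^ (s₂ + 1)) X) := by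
  intro X
  set A₁ := compT n N ImF l * ImF p ^ s₁ with hA₁
  set A₂ := compT n N ImF l * ImF p ^ s₂ with hA₂
  set M := ImF p X with hM
  -- derivative of a
  have hfa : ∀ v, fderiv ℝ (fun Z => BIm Z Z) X v = 2 * symp n v M := by
    intro v
    have h := fderiv_bilin BIm 1 1 X v
    simp only [Module.End.one_apply] at h
    rw [h, hImsym X v, hImHam v X]
    ring
  -- derivative of b
  have hfb : ∀ v, fderiv ℝ
      (fun Z => B (A₁ Z) (A₂ Z)) X v = B (A₁ v) (A₂ X) + B (A₁ X) (A₂ v) :=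
    fderiv_bilin B A₁ A₂ X
  set G : PS n →ₗ[ℝ] ℝ := (B.flip (A₂ X)) ∘ₗ (A₁ : PS n →ₗ[ℝ] PS n)
      + (B (A₁ X)) ∘ₗ (A₂ : PS n →ₗ[ℝ] PS n) with hG
  have hGv : ∀ v, G v = B (A₁ v) (A₂ X) + B (A₁ X) (A₂ v) := by
    intro v; simp [hG]
  have e1 : ∀ i : Fin n, symp n ((0 : Fin n → ℝ), Pi.single i 1) M = M.1 i := by
    intro i; simp [symp, Pi.single_apply]
  have e2 : ∀ i : Fin n, symp n (Pi.single i 1, (0 : Fin n → ℝ)) M = -(M.2 i) := by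
    intro i; simp [symp, Pi.single_apply]
  have key : poisson n (fun Z => BIm Z Z) (fun Z => B (A₁ Z) (A₂ Z)) X = 2 * G M := by
    unfold poisson
    have step : ∀ i : Fin n,
        (fderiv ℝ (fun Z => BIm Z Z) X) ((0 : Fin n → ℝ), Pi.single i 1) *
            (fderiv ℝ (fun Z => B (A₁ Z) (A₂ Z)) X) (Pi.single i 1, (0 : Fin n → ℝ)) -
          (fderiv ℝ (fun Z => BIm Z Z) X) (Pi.single i 1, (0 : Fin n → ℝ)) *
            (fderiv ℝ (fun Z => B (A₁ Z) (A₂ Z)) X) ((0 : Fin n → ℝ), Pi.single i 1)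
        = 2 * (M.1 i • G (Pi.single i 1, (0 : Fin n → ℝ))
            + M.2 i • G ((0 : Fin n → ℝ), Pi.single i 1)) := by
      intro i
      rw [hfa, hfa, hfb, hfb, e1 i, e2 i, ← hGv, ← hGv]
      simp only [smul_eq_mul]
      ring
    rw [Finset.sum_congr rfl fun i _ => step i, ← Finset.mul_sum]
    congr 1
    conv_rhs => rw [ps_decomp M]
    rw [map_add, map_sum, map_sum]
    simp only [map_smul, Finset.sum_add_distrib]
  rw [key, hGv]
  have hA₁M : A₁ M = (compT n N ImF l * ImF p ^ (s₁ + 1)) X := by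
    rw [hM, pow_succ, ← mul_assoc]
    rfl
  have hA₂M : A₂ M = (compT n N ImF l * ImF p ^ (s₂ + 1)) X := by
    rw [hM, pow_succ, ← mul_assoc]
    rfl
  rw [hA₁M, hA₂M]
  ring
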